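/- arXiv:1703.03837 — 4 statements merged into one kernel-verified Lean document; each statement's English description precedes it below -/
import Mathlib

section
/- Let G be a group, O a normal subgroup of G, and K = ⁅O, G⁆. Let (L_i)_{i ≥ 1} denote the lower central series of G, so L₁ = G and L_{i+1} = ⁅L_i, G⁆. Then for every i ≥ 1 the following equality of subgroups of G holds: (O ∩ L_i) ∩ ((K ∩ L_i)·L_{i+1}) = (K·(O ∩ L_{i+1})) ∩ L_i. Here, for a normal subgroup N and a subgroup H, H·N denotes the subgroup generated by H and N (their join); since L_{i+1} and K are normal in G, both products (K ∩ L_i)·L_{i+1} and K·(O ∩ L_{i+1}) are subgroups of G. -/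
private lemma mem_sup_of_normal {G : Type*} [Group G] (A B : Subgroup G) [B.Normal]
    {x : G} : x ∈ A ⊔ B ↔ ∃ a ∈ A, ∃ b ∈ B, a * b = x := by
  rw [← SetLike.mem_coe, Subgroup.mul_normal]
  exact Set.mem_mul

/-- Let `G` be a group, `O` a normal subgroup of `G`, and `K = ⁅O, G⁆`.
Let `(L_i)_{i ≥ 1}` be the lower central series of `G`, so `L₁ = G` and
`L_{i+1} = ⁅L_i, G⁆`; in Mathlib's indexing `L_{i+1} = (⊤ : Subgroup G).lowerCentralSeries i`.
Then for every `i ≥ 1` one has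
`(O ∩ L_i) ∩ ((K ∩ L_i)·L_{i+1}) = (K·(O ∩ L_{i+1})) ∩ L_i`,
where the product of subgroups is their join. -/
theorem stmt5 {G : Type*} [Group G] (O : Subgroup G) (hO : O.Normal)
    (K : Subgroup G) (hK : K = ⁅O, (⊤ : Subgroup G)⁆) (i : ℕ) :
    (O ⊓ (⊤ : Subgroup G).lowerCentralSeries i) ⊓
        ((K ⊓ (⊤ : Subgroup G).lowerCentralSeries i) ⊔ (⊤ : Subgroup G).lowerCentralSeries (i + 1)) =
      (K ⊔ (O ⊓ (⊤ : Subgroup G).lowerCentralSeries (i + 1))) ⊓ (⊤ : Subgroup G).lowerCentralSeries i := by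
  haveI := hO
  haveI : K.Normal := by rw [hK]; infer_instance
  have hKO : K ≤ O := by rw [hK]; exact Subgroup.commutator_le_left O ⊤
  have hL : (⊤ : Subgroup G).lowerCentralSeries (i + 1) ≤ (⊤ : Subgroup G).lowerCentralSeries i :=
    lowerCentralSeries_antitone ⊤ (Nat.le_succ i)
  ext x
  simp only [Subgroup.mem_inf, mem_sup_of_normal]
  constructor
  · rintro ⟨⟨hxO, hxL⟩, k, hk, n, hn, rfl⟩
    have hnO : n ∈ O := by
      have : k⁻¹ * (k * n) ∈ O := O.mul_mem (O.inv_mem (hKO hk.1)) hxO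
      simpa using this
    exact ⟨⟨k, hk.1, n, ⟨hnO, hn⟩, rfl⟩, hxL⟩
  · rintro ⟨⟨k, hk, n, hn, rfl⟩, hxL⟩
    have hkL : k ∈ (⊤ : Subgroup G).lowerCentralSeries i := by
      have : (k * n) * n⁻¹ ∈ (⊤ : Subgroup G).lowerCentralSeries i :=
        ((⊤ : Subgroup G).lowerCentralSeries i).mul_mem hxL (((⊤ : Subgroup G).lowerCentralSeries i).inv_mem (hL hn.2))
      simpa using this
    exact ⟨⟨O.mul_mem (hKO hk) hn.1, hxL⟩, k, ⟨hk, hkL⟩, n, hn.2, rfl⟩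
end

section
/- Let n ≥ 1, let φ₁, …, φₙ : [0,1] → ℂ be continuous, and let c ∈ [0,1]. Then the iterated integral decomposes at c as follows: ∫_{0 ≤ t₁ ≤ ⋯ ≤ tₙ ≤ 1} φ₁(t₁)⋯φₙ(tₙ) dt₁⋯dtₙ = Σ_{i=0}^{n} (∫_{0 ≤ t₁ ≤ ⋯ ≤ t_i ≤ c} φ₁(t₁)⋯φ_i(t_i) dt₁⋯dt_i) · (∫_{c ≤ t_{i+1} ≤ ⋯ ≤ tₙ ≤ 1} φ_{i+1}(t_{i+1})⋯φₙ(tₙ) dt_{i+1}⋯dtₙ), where an empty integral (i = 0 or i = n factor with no variables) is taken to be 1. -/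
open MeasureTheory

/-- The iterated integral `I(φ₁,…,φₙ)` over the simplex
`{a ≤ t₁ ≤ ⋯ ≤ tₙ ≤ b} ⊂ ℝⁿ` of the product `φ₁(t₁)⋯φₙ(tₙ)`, with respect to
Lebesgue measure.  For `n = 0` it equals `1` by convention. -/
noncomputable def simplexIntegral (n : ℕ) (φ : Fin n → ℝ → ℂ) (a b : ℝ) : ℂ :=
  ∫ t : Fin n → ℝ in
    {t | (∀ i, a ≤ t i ∧ t i ≤ b) ∧ ∀ i j : Fin n, i ≤ j → t i ≤ t j},
    ∏ i, φ i (t i)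

namespace Stmt7Aux

def sSet (n : ℕ) (a b : ℝ) : Set (Fin n → ℝ) :=
  {t | (∀ i, a ≤ t i ∧ t i ≤ b) ∧ ∀ i j : Fin n, i ≤ j → t i ≤ t j}

lemma simplexIntegral_eq (n : ℕ) (φ : Fin n → ℝ → ℂ) (a b : ℝ) :
    simplexIntegral n φ a b = ∫ t in sSet n a b, ∏ i, φ i (t i) := rfl

lemma isClosed_sSet (n : ℕ) (a b : ℝ) : IsClosed (sSet n a b) := by
  have h1 : IsClosed {t : Fin n → ℝ | ∀ i, a ≤ t i ∧ t i ≤ b} := by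
    rw [Set.setOf_forall]
    exact isClosed_iInter fun i => (isClosed_le continuous_const (continuous_apply i)).inter
      (isClosed_le (continuous_apply i) continuous_const)
  have h2 : IsClosed {t : Fin n → ℝ | ∀ i j : Fin n, i ≤ j → t i ≤ t j} := by
    rw [Set.setOf_forall]
    refine isClosed_iInter fun i => ?_
    rw [Set.setOf_forall]
    refine isClosed_iInter fun j => ?_
    by_cases h : i ≤ j
    · simp only [h, forall_true_left]
      exact isClosed_le (continuous_apply i) (continuous_apply j)
    · simp only [h, IsEmpty.forall_iff]
      simpa using isClosed_univ
  exact h1.inter h2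

lemma isCompact_sSet (n : ℕ) (a b : ℝ) : IsCompact (sSet n a b) := by
  refine (isCompact_univ_pi fun _ : Fin n => isCompact_Icc (a := a) (b := b)).of_isClosed_subset
    (isClosed_sSet n a b) ?_
  intro t ht i _
  exact ⟨(ht.1 i).1, (ht.1 i).2⟩

lemma integrableOn_sSet (n : ℕ) (a b : ℝ) (φ : Fin n → ℝ → ℂ)
    (hφ : ∀ i, ContinuousOn (φ i) (Set.Icc a b)) :
    IntegrableOn (fun t => ∏ i, φ i (t i)) (sSet n a b) := by
  refine ContinuousOn.integrableOn_compact (isCompact_sSet n a b) ?_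
  refine continuousOn_finset_prod _ fun i _ => (hφ i).comp (continuous_apply i).continuousOn ?_
  intro t ht
  exact ⟨(ht.1 i).1, (ht.1 i).2⟩

def mSet (n i : ℕ) (c : ℝ) : Set (Fin n → ℝ) :=
  sSet n 0 1 ∩ {t | ∀ j : Fin n, (j.1 < i → t j ≤ c) ∧ (i ≤ j.1 → c ≤ t j)}

lemma isClosed_mSet (n i : ℕ) (c : ℝ) : IsClosed (mSet n i c) := by
  refine (isClosed_sSet n 0 1).inter ?_
  rw [Set.setOf_forall]
  refine isClosed_iInter fun j => ?_
  have h1 : IsClosed {t : Fin n → ℝ | j.1 < i → t j ≤ c} := by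
    by_cases h : j.1 < i
    · simp only [h, forall_true_left]
      exact isClosed_le (continuous_apply j) continuous_const
    · simp only [h, IsEmpty.forall_iff]
      simpa using isClosed_univ
  have h2 : IsClosed {t : Fin n → ℝ | i ≤ j.1 → c ≤ t j} := by
    by_cases h : i ≤ j.1
    · simp only [h, forall_true_left]
      exact isClosed_le continuous_const (continuous_apply j)
    · simp only [h, IsEmpty.forall_iff]
      simpa using isClosed_univ
  exact h1.inter h2

lemma sSet_eq_iUnion (n : ℕ) (c : ℝ) :
    sSet n 0 1 = ⋃ k : Fin (n + 1), mSet n k.1 c := by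
  ext t
  constructor
  · intro ht
    set F := Finset.univ.filter (fun j : Fin n => t j ≤ c) with hF
    have hcard : F.card ≤ n := le_trans (Finset.card_le_card (Finset.subset_univ F)) (by simp)
    have key : ∀ j : Fin n, t j ≤ c ↔ j.1 < F.card := by
      intro j
      constructor
      · intro h
        have hsub : Finset.Iic j ⊆ F := by
          intro j' hj'
          rw [Finset.mem_Iic] at hj'
          simp only [hF, Finset.mem_filter, Finset.mem_univ, true_and]
          exact le_trans (ht.2 j' j hj') h
        have := Finset.card_le_card hsub
        rw [Fin.card_Iic] at this
        omega
      · intro h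
        by_contra hc2
        have hsub : F ⊆ Finset.Iio j := by
          intro j' hj'
          simp only [hF, Finset.mem_filter, Finset.mem_univ, true_and] at hj'
          rw [Finset.mem_Iio]
          by_contra hle
          exact hc2 (le_trans (ht.2 j j' (le_of_not_gt hle)) hj')
        have := Finset.card_le_card hsub
        rw [Fin.card_Iio] at this
        omega
    refine Set.mem_iUnion.2 ⟨⟨F.card, by omega⟩, ht, fun j => ⟨fun h => (key j).2 h, fun h => ?_⟩⟩
    have h' : F.card ≤ j.1 := h
    by_contra hc2
    have := (key j).1 (le_of_not_ge hc2)
    omega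
  · intro ht
    obtain ⟨k, hk⟩ := Set.mem_iUnion.1 ht
    exact hk.1

lemma aedisjoint_mSet (n : ℕ) (c : ℝ) :
    Pairwise (Function.onFun (AEDisjoint (volume : Measure (Fin n → ℝ)))
      (fun k : Fin (n + 1) => mSet n k.1 c)) := by
  have main : ∀ k l : Fin (n + 1), k.1 < l.1 →
      AEDisjoint (volume : Measure (Fin n → ℝ)) (mSet n k.1 c) (mSet n l.1 c) := by
    intro k l hkl
    have hkn : k.1 < n := by omega
    set j₀ : Fin n := ⟨k.1, hkn⟩
    have hsub : mSet n k.1 c ∩ mSet n l.1 c ⊆ {t : Fin n → ℝ | t j₀ = c} := by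
      intro t ⟨h1, h2⟩
      exact le_antisymm ((h2.2 j₀).1 (by simp [j₀]; omega)) ((h1.2 j₀).2 (by simp [j₀]))
    refine measure_mono_null hsub ?_
    rw [volume_pi]
    exact Measure.pi_hyperplane (fun _ => (volume : Measure ℝ)) j₀ c
  intro k l hkl
  rcases lt_or_gt_of_ne (fun h => hkl (Fin.ext h) : k.1 ≠ l.1) with h | h
  · exact main k l h
  · exact (main l k h).symm

lemma split (i m : ℕ) (φ : Fin (i + m) → ℝ → ℂ) {c : ℝ} (hc0 : 0 ≤ c) (hc1 : c ≤ 1) :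
    ∫ t in mSet (i + m) i c, ∏ j, φ j (t j) =
      simplexIntegral i (fun a => φ (Fin.castAdd m a)) 0 c *
        simplexIntegral m (fun b => φ (Fin.natAdd i b)) c 1 := by
  set E : ((Fin i → ℝ) × (Fin m → ℝ)) ≃ᵐ (Fin (i + m) → ℝ) :=
    (MeasurableEquiv.sumPiEquivProdPi fun _ : Fin i ⊕ Fin m => ℝ).symm.trans
      (MeasurableEquiv.piCongrLeft (fun _ : Fin (i + m) => ℝ) finSumFinEquiv) with hE
  have hl : ∀ (x : Fin i → ℝ) (y : Fin m → ℝ) (a : Fin i),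
      E (x, y) (finSumFinEquiv (Sum.inl a)) = x a := fun x y a =>
    Equiv.piCongrLeft_sumInl (fun _ => ℝ) finSumFinEquiv x y a
  have hr : ∀ (x : Fin i → ℝ) (y : Fin m → ℝ) (b : Fin m),
      E (x, y) (finSumFinEquiv (Sum.inr b)) = y b := fun x y b =>
    Equiv.piCongrLeft_sumInr (fun _ => ℝ) finSumFinEquiv x y b
  have hEP : MeasurePreserving E volume volume := by
    have h2 := volume_measurePreserving_piCongrLeft (fun _ : Fin (i + m) => ℝ) finSumFinEquiv
    have h1 := volume_measurePreserving_sumPiEquivProdPi_symm (fun _ : Fin i ⊕ Fin m => ℝ)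
    exact h2.comp h1
  have hpre : E ⁻¹' mSet (i + m) i c = sSet i 0 c ×ˢ sSet m c 1 := by
    ext ⟨x, y⟩
    simp only [Set.mem_preimage, Set.mem_prod, mSet, sSet, Set.mem_inter_iff, Set.mem_setOf_eq]
    constructor
    · rintro ⟨⟨hb, hs⟩, hm2⟩
      refine ⟨⟨fun a => ⟨?_, ?_⟩, fun a a' haa => ?_⟩, ⟨fun b => ⟨?_, ?_⟩, fun b b' hbb => ?_⟩⟩
      · have := (hb (finSumFinEquiv (Sum.inl a))).1
        rwa [hl] at this
      · have := (hm2 (finSumFinEquiv (Sum.inl a))).1 (by simpa using a.isLt)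
        rwa [hl] at this
      · have := hs _ _ (show finSumFinEquiv (Sum.inl a) ≤ finSumFinEquiv (Sum.inl a') by
          simp only [finSumFinEquiv_apply_left, Fin.le_def, Fin.coe_castAdd]; exact haa)
        rwa [hl, hl] at this
      · have := (hm2 (finSumFinEquiv (Sum.inr b))).2 (by simp)
        rwa [hr] at this
      · have := (hb (finSumFinEquiv (Sum.inr b))).2
        rwa [hr] at this
      · have := hs _ _ (show finSumFinEquiv (Sum.inr b) ≤ finSumFinEquiv (Sum.inr b') by
          simp only [finSumFinEquiv_apply_right, Fin.le_def, Fin.coe_natAdd]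
          exact Nat.add_le_add_left hbb i)
        rwa [hr, hr] at this
    · rintro ⟨⟨hx, hxs⟩, ⟨hy, hys⟩⟩
      refine ⟨⟨fun j => ?_, fun j j' hjj => ?_⟩, fun j => ⟨fun hji => ?_, fun hij => ?_⟩⟩
      · obtain ⟨s, rfl⟩ := finSumFinEquiv.surjective j
        cases s with
        | inl a => rw [hl]; exact ⟨(hx a).1, le_trans (hx a).2 hc1⟩
        | inr b => rw [hr]; exact ⟨le_trans hc0 (hy b).1, (hy b).2⟩
      · obtain ⟨s, rfl⟩ := finSumFinEquiv.surjective j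
        obtain ⟨s', rfl⟩ := finSumFinEquiv.surjective j'
        cases s with
        | inl a =>
          cases s' with
          | inl a' =>
            rw [hl, hl]
            refine hxs a a' ?_
            simpa only [finSumFinEquiv_apply_left, Fin.le_def, Fin.coe_castAdd] using hjj
          | inr b' =>
            rw [hl, hr]
            exact le_trans (hx a).2 (hy b').1
        | inr b =>
          cases s' with
          | inl a' =>
            have : i + b.1 ≤ a'.1 := by
              simpa only [finSumFinEquiv_apply_right, finSumFinEquiv_apply_left, Fin.le_def,
                Fin.coe_natAdd, Fin.coe_castAdd] using hjj
            exact absurd a'.isLt (by omega)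
          | inr b' =>
            rw [hr, hr]
            refine hys b b' ?_
            have : i + b.1 ≤ i + b'.1 := by
              simpa only [finSumFinEquiv_apply_right, Fin.le_def, Fin.coe_natAdd] using hjj
            omega
      · obtain ⟨s, rfl⟩ := finSumFinEquiv.surjective j
        cases s with
        | inl a => rw [hl]; exact (hx a).2
        | inr b =>
          simp only [finSumFinEquiv_apply_right, Fin.coe_natAdd] at hji
          omega
      · obtain ⟨s, rfl⟩ := finSumFinEquiv.surjective j
        cases s with
        | inl a =>
          simp only [finSumFinEquiv_apply_left, Fin.coe_castAdd] at hij
          exact absurd hij (by omega)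
        | inr b => rw [hr]; exact (hy b).1
  have hfun : ∀ p : (Fin i → ℝ) × (Fin m → ℝ),
      (∏ j, φ j (E p j)) =
        (∏ a, φ (Fin.castAdd m a) (p.1 a)) * ∏ b, φ (Fin.natAdd i b) (p.2 b) := by
    rintro ⟨x, y⟩
    rw [← finSumFinEquiv.prod_comp (fun j => φ j (E (x, y) j)), Fintype.prod_sum_type]
    congr 1
    · refine Finset.prod_congr rfl fun a _ => ?_
      rw [hl, finSumFinEquiv_apply_left]
    · refine Finset.prod_congr rfl fun b _ => ?_
      rw [hr, finSumFinEquiv_apply_right]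
  have h1 : ∫ t in mSet (i + m) i c, ∏ j, φ j (t j) =
      ∫ p in E ⁻¹' mSet (i + m) i c, ∏ j, φ j (E p j) :=
    (hEP.setIntegral_preimage_emb E.measurableEmbedding _ _).symm
  rw [h1, hpre]
  calc ∫ p in sSet i 0 c ×ˢ sSet m c 1, ∏ j, φ j (E p j) =
      ∫ p in sSet i 0 c ×ˢ sSet m c 1,
        (∏ a, φ (Fin.castAdd m a) (p.1 a)) * ∏ b, φ (Fin.natAdd i b) (p.2 b) := by
        simp only [hfun]
    _ = _ := by
        rw [simplexIntegral_eq, simplexIntegral_eq, Measure.volume_eq_prod]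
        exact setIntegral_prod_mul (L := ℂ) (fun x : Fin i → ℝ => ∏ a, φ (Fin.castAdd m a) (x a))
          (fun y : Fin m → ℝ => ∏ b, φ (Fin.natAdd i b) (y b)) _ _
end Stmt7Aux

lemma split' (n i m : ℕ) (h : i + m = n) (φ : Fin n → ℝ → ℂ) {c : ℝ}
    (hc0 : 0 ≤ c) (hc1 : c ≤ 1) :
    ∫ t in Stmt7Aux.mSet n i c, ∏ j, φ j (t j) =
      simplexIntegral i (fun a => φ ⟨a.1, by omega⟩) 0 c *
        simplexIntegral m (fun b => φ ⟨i + b.1, by omega⟩) c 1 := by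
  subst h
  exact Stmt7Aux.split i m φ hc0 hc1

/-- decomposition of an iterated integral at an intermediate point
`c ∈ [0,1]` (Chen's formula for the concatenation of two paths):
`I(φ₁,…,φₙ)₀¹ = Σ_{i=0}^{n} I(φ₁,…,φ_i)₀ᶜ · I(φ_{i+1},…,φₙ)_c¹`. -/
theorem stmt7 (n : ℕ) (hn : 1 ≤ n) (φ : Fin n → ℝ → ℂ)
    (hφ : ∀ i, ContinuousOn (φ i) (Set.Icc 0 1))
    (c : ℝ) (hc : c ∈ Set.Icc (0 : ℝ) 1) :
    simplexIntegral n φ 0 1 =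
      ∑ i : Fin (n + 1),
        simplexIntegral i.1 (fun j => φ ⟨j.1, by omega⟩) 0 c *
          simplexIntegral (n - i.1) (fun j => φ ⟨i.1 + j.1, by omega⟩) c 1 := by
  
  obtain ⟨hc0, hc1⟩ := hc
  rw [show simplexIntegral n φ 0 1 = ∫ t in Stmt7Aux.sSet n 0 1, ∏ i, φ i (t i) from rfl,
    Stmt7Aux.sSet_eq_iUnion n c,
    integral_iUnion_ae (s := fun k : Fin (n + 1) => Stmt7Aux.mSet n k.1 c)
      (fun k => (Stmt7Aux.isClosed_mSet n k.1 c).measurableSet.nullMeasurableSet)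
      (Stmt7Aux.aedisjoint_mSet n c)
      (by rw [← Stmt7Aux.sSet_eq_iUnion n c]; exact Stmt7Aux.integrableOn_sSet n 0 1 φ hφ),
    tsum_fintype]
  refine Finset.sum_congr rfl fun k _ => ?_
  exact split' n k.1 (n - k.1) (by have := k.2; omega) φ hc0 hc1
end

section
/- Let n, m ≥ 1 and let φ₁, …, φ_{n+m} : [0,1] → ℂ be continuous. Then the product of iterated integrals is a sum over shuffles: I(φ₁, …, φₙ) · I(φ_{n+1}, …, φ_{n+m}) = Σ_σ I(φ_{σ⁻¹(1)}, …, φ_{σ⁻¹(n+m)}), where σ ranges over all permutations of {1, …, n+m} satisfying σ(1) < σ(2) < ⋯ < σ(n) and σ(n+1) < σ(n+2) < ⋯ < σ(n+m) (the (n,m)-shuffles). -/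
open MeasureTheory
open scoped Classical

namespace StmtNineAux

/-- The closed standard simplex in the unit cube. -/
def sSimplex (N : ℕ) : Set (Fin N → ℝ) :=
  {t | (∀ i, 0 ≤ t i ∧ t i ≤ 1) ∧ ∀ i j : Fin N, i ≤ j → t i ≤ t j}

/-- The open (strict) simplex. -/
def sStrict (N : ℕ) : Set (Fin N → ℝ) :=
  {t | (∀ i, 0 ≤ t i ∧ t i ≤ 1) ∧ StrictMono t}

/-- The unit cube. -/
def sCube (N : ℕ) : Set (Fin N → ℝ) := Set.pi Set.univ fun _ => Set.Icc (0:ℝ) 1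

/-- The piece of the product of simplices corresponding to a permutation `σ`. -/
def aSet {N : ℕ} (σ : Equiv.Perm (Fin N)) : Set (Fin N → ℝ) :=
  {t | (∀ i, 0 ≤ t i ∧ t i ≤ 1) ∧ StrictMono fun j => t (σ⁻¹ j)}

lemma ms_bounds {N : ℕ} : MeasurableSet {t : Fin N → ℝ | ∀ i, 0 ≤ t i ∧ t i ≤ 1} := by
  have h : {t : Fin N → ℝ | ∀ i, 0 ≤ t i ∧ t i ≤ 1} =
      ⋂ i, ((fun t : Fin N → ℝ => t i) ⁻¹' Set.Icc 0 1) := by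
    ext t; simp [Set.mem_iInter, Set.mem_Icc]
  rw [h]
  exact MeasurableSet.iInter fun i => measurable_pi_apply i measurableSet_Icc

lemma ms_strict {N : ℕ} (g : Fin N → Fin N) :
    MeasurableSet {t : Fin N → ℝ | StrictMono fun j => t (g j)} := by
  have h : {t : Fin N → ℝ | StrictMono fun j => t (g j)} =
      ⋂ i, ⋂ j, {t : Fin N → ℝ | i < j → t (g i) < t (g j)} := by
    ext t
    simp only [Set.mem_iInter, Set.mem_setOf_eq]
    exact ⟨fun h i j => h (a := i) (b := j), fun h a b => h a b⟩
  rw [h]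
  refine MeasurableSet.iInter fun i => MeasurableSet.iInter fun j => ?_
  by_cases hij : i < j
  · have : {t : Fin N → ℝ | i < j → t (g i) < t (g j)} = {t | t (g i) < t (g j)} := by
      ext t; simp [hij]
    rw [this]
    exact measurableSet_lt (measurable_pi_apply _) (measurable_pi_apply _)
  · have : {t : Fin N → ℝ | i < j → t (g i) < t (g j)} = Set.univ := by
      ext t; simp [hij]
    rw [this]; exact MeasurableSet.univ

lemma ms_mono {N : ℕ} : MeasurableSet {t : Fin N → ℝ | ∀ i j : Fin N, i ≤ j → t i ≤ t j} := by
  have h : {t : Fin N → ℝ | ∀ i j : Fin N, i ≤ j → t i ≤ t j} =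
      ⋂ i, ⋂ j, {t : Fin N → ℝ | i ≤ j → t i ≤ t j} := by
    ext t; simp [Set.mem_iInter]
  rw [h]
  refine MeasurableSet.iInter fun i => MeasurableSet.iInter fun j => ?_
  by_cases hij : i ≤ j
  · have : {t : Fin N → ℝ | i ≤ j → t i ≤ t j} = {t | t i ≤ t j} := by
      ext t; simp [hij]
    rw [this]
    exact measurableSet_le (measurable_pi_apply _) (measurable_pi_apply _)
  · have : {t : Fin N → ℝ | i ≤ j → t i ≤ t j} = Set.univ := by
      ext t; simp [hij]
    rw [this]; exact MeasurableSet.univ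

lemma ms_sSimplex {N : ℕ} : MeasurableSet (sSimplex N) := by
  have : sSimplex N = {t : Fin N → ℝ | ∀ i, 0 ≤ t i ∧ t i ≤ 1} ∩
      {t : Fin N → ℝ | ∀ i j : Fin N, i ≤ j → t i ≤ t j} := rfl
  rw [this]; exact ms_bounds.inter ms_mono

lemma ms_aSet {N : ℕ} (σ : Equiv.Perm (Fin N)) : MeasurableSet (aSet σ) := by
  have : aSet σ = {t : Fin N → ℝ | ∀ i, 0 ≤ t i ∧ t i ≤ 1} ∩
      {t : Fin N → ℝ | StrictMono fun j => t (σ⁻¹ j)} := rfl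
  rw [this]; exact ms_bounds.inter (ms_strict _)

lemma volume_eq_zero_pair {N : ℕ} {i j : Fin N} (hij : i ≠ j) :
    volume {t : Fin N → ℝ | t i = t j} = 0 := by
  have h : {t : Fin N → ℝ | t i = t j} =
      (LinearMap.ker ((LinearMap.proj i : (Fin N → ℝ) →ₗ[ℝ] ℝ) - LinearMap.proj j) :
        Set (Fin N → ℝ)) := by
    ext t
    simp [LinearMap.mem_ker, sub_eq_zero]
  rw [h]
  refine Measure.addHaar_submodule _ _ ?_
  intro htop
  have hmem : Pi.single i (1:ℝ) ∈
      LinearMap.ker ((LinearMap.proj i : (Fin N → ℝ) →ₗ[ℝ] ℝ) - LinearMap.proj j) := by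
    rw [htop]; trivial
  rw [LinearMap.mem_ker] at hmem
  simp [LinearMap.proj, Pi.single_eq_same, Pi.single_eq_of_ne (Ne.symm hij)] at hmem

lemma volume_not_injective {N : ℕ} :
    volume {t : Fin N → ℝ | ¬ Function.Injective t} = 0 := by
  have hsub : {t : Fin N → ℝ | ¬ Function.Injective t} ⊆
      ⋃ (i : Fin N), ⋃ (j : Fin N), ⋃ (_ : i ≠ j), {t : Fin N → ℝ | t i = t j} := by
    intro t ht
    simp only [Set.mem_setOf_eq] at ht
    unfold Function.Injective at ht
    push_neg at ht
    obtain ⟨a, b, hab, hne⟩ := ht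
    exact Set.mem_iUnion.2 ⟨a, Set.mem_iUnion.2 ⟨b, Set.mem_iUnion.2 ⟨hne, hab⟩⟩⟩
  refine measure_mono_null hsub ?_
  exact measure_iUnion_null fun i => measure_iUnion_null fun j =>
    measure_iUnion_null fun h => volume_eq_zero_pair h

lemma perm_eq_one_of_strictMono {N : ℕ} (π : Equiv.Perm (Fin N)) (h : StrictMono ⇑π) :
    π = 1 := by
  have hinv : StrictMono ⇑π⁻¹ := by
    intro a b hab
    rw [← h.lt_iff_lt]
    simpa using hab
  apply Equiv.ext
  intro i
  haveI : WellFoundedLT (Fin N) := inferInstance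
  have h1 : i ≤ π i := h.le_apply
  have h3 : π i ≤ i := by
    have h2 : π i ≤ π⁻¹ (π i) := hinv.le_apply
    simpa using h2
  simpa using le_antisymm h3 h1

lemma sort_unique {N : ℕ} {t : Fin N → ℝ} (σ τ : Equiv.Perm (Fin N))
    (hσ : StrictMono fun j => t (σ⁻¹ j)) (hτ : StrictMono fun j => t (τ⁻¹ j)) : σ = τ := by
  have hπ : StrictMono ⇑(σ * τ⁻¹) := by
    intro a b hab
    have h1 : t (τ⁻¹ a) < t (τ⁻¹ b) := hτ hab
    have h2 : (fun j => t (σ⁻¹ j)) (σ (τ⁻¹ a)) < (fun j => t (σ⁻¹ j)) (σ (τ⁻¹ b)) := by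
      simpa using h1
    exact hσ.lt_iff_lt.mp h2
  have := perm_eq_one_of_strictMono _ hπ
  rwa [mul_inv_eq_one] at this

lemma sStrict_ae_sSimplex (N : ℕ) : sStrict N =ᵐ[volume] sSimplex N := by
  rw [MeasureTheory.ae_eq_set]
  constructor
  · have hsub : sStrict N ⊆ sSimplex N := fun t ht =>
      ⟨ht.1, fun i j hij => ht.2.monotone hij⟩
    rw [Set.diff_eq_empty.2 hsub]
    simp
  · refine measure_mono_null ?_ volume_not_injective
    rintro t ⟨htS, htns⟩
    simp only [Set.mem_setOf_eq]
    intro hinj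
    refine htns ⟨htS.1, fun i j hij => ?_⟩
    exact lt_of_le_of_ne (htS.2 i j hij.le) fun h => hij.ne (hinj h)

lemma integrableOn_cube {N : ℕ} (φ : Fin N → ℝ → ℂ)
    (hφ : ∀ i, ContinuousOn (φ i) (Set.Icc 0 1)) :
    IntegrableOn (fun t : Fin N → ℝ => ∏ i, φ i (t i)) (sCube N) := by
  refine ContinuousOn.integrableOn_compact (isCompact_univ_pi fun _ => isCompact_Icc) ?_
  refine continuousOn_finset_prod Finset.univ fun i _ => ?_
  exact (hφ i).comp (continuous_apply i).continuousOn fun t ht => ht i (Set.mem_univ i)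

lemma aSet_subset_cube {N : ℕ} (σ : Equiv.Perm (Fin N)) : aSet σ ⊆ sCube N := fun t ht =>
  Set.mem_univ_pi.2 fun i => Set.mem_Icc.2 (ht.1 i)

lemma sStrict_subset_cube (N : ℕ) : sStrict N ⊆ sCube N := fun t ht =>
  Set.mem_univ_pi.2 fun i => Set.mem_Icc.2 (ht.1 i)

lemma sSimplex_subset_cube (N : ℕ) : sSimplex N ⊆ sCube N := fun t ht =>
  Set.mem_univ_pi.2 fun i => Set.mem_Icc.2 (ht.1 i)

end StmtNineAux

open StmtNineAux in
/-- the shuffle formula.  The product of the iterated integrals of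
`φ₁,…,φₙ` and of `φ_{n+1},…,φ_{n+m}` is the sum, over all `(n,m)`-shuffles `σ`
(permutations of `{1,…,n+m}` increasing on the first `n` and on the last `m`
indices), of the iterated integrals `I(φ_{σ⁻¹(1)},…,φ_{σ⁻¹(n+m)})`. -/
theorem stmt9 (n m : ℕ) (hn : 1 ≤ n) (hm : 1 ≤ m) (φ : Fin (n + m) → ℝ → ℂ)
    (hφ : ∀ i, ContinuousOn (φ i) (Set.Icc 0 1)) :
    simplexIntegral n (fun i => φ (Fin.castAdd m i)) 0 1 *
        simplexIntegral m (fun i => φ (Fin.natAdd n i)) 0 1 =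
      ∑ σ ∈ Finset.univ.filter (fun σ : Equiv.Perm (Fin (n + m)) =>
          StrictMono (fun i : Fin n => σ (Fin.castAdd m i)) ∧
          StrictMono (fun i : Fin m => σ (Fin.natAdd n i))),
        simplexIntegral (n + m) (fun i => φ (σ⁻¹ i)) 0 1 := by
  classical
  set Sh : Finset (Equiv.Perm (Fin (n + m))) :=
    Finset.univ.filter (fun σ : Equiv.Perm (Fin (n + m)) =>
      StrictMono (fun i : Fin n => σ (Fin.castAdd m i)) ∧
      StrictMono (fun i : Fin m => σ (Fin.natAdd n i))) with hSh
  -- the integrand on the big space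
  set f : (Fin (n + m) → ℝ) → ℂ := fun t => ∏ i, φ i (t i) with hf
  -- measure preserving equivalence to the product space
  let e1 := MeasurableEquiv.piCongrLeft (fun _ : Fin (n + m) => ℝ) finSumFinEquiv
  let e2 := MeasurableEquiv.sumPiEquivProdPi (fun _ : Fin n ⊕ Fin m => ℝ)
  let F : (Fin (n + m) → ℝ) ≃ᵐ (Fin n → ℝ) × (Fin m → ℝ) := e1.symm.trans e2
  have mpF : MeasurePreserving (⇑F) volume volume := by
    exact (volume_measurePreserving_sumPiEquivProdPi (fun _ : Fin n ⊕ Fin m => ℝ)).comp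
      ((volume_measurePreserving_piCongrLeft (fun _ : Fin (n + m) => ℝ) finSumFinEquiv).symm)
  have hF : ∀ t : Fin (n + m) → ℝ,
      F t = (fun i => t (Fin.castAdd m i), fun j => t (Fin.natAdd n j)) := by
    intro t
    have h0 : F t = (fun i => t (finSumFinEquiv (Sum.inl i)),
        fun j => t (finSumFinEquiv (Sum.inr j))) := rfl
    rw [h0]
    simp [finSumFinEquiv_apply_left, finSumFinEquiv_apply_right]
  -- integrability
  have hIntCube : IntegrableOn f (sCube (n + m)) := integrableOn_cube φ hφ
  have hIntA : ∀ σ : Equiv.Perm (Fin (n + m)), IntegrableOn f (aSet σ) := fun σ =>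
    hIntCube.mono_set (aSet_subset_cube σ)
  -- membership description of the preimage
  have hDmem : ∀ t : Fin (n + m) → ℝ,
      t ∈ F ⁻¹' (sSimplex n ×ˢ sSimplex m) ↔
        ((fun i => t (Fin.castAdd m i)) ∈ sSimplex n ∧
         (fun j => t (Fin.natAdd n j)) ∈ sSimplex m) := by
    intro t
    rw [Set.mem_preimage, hF t, Set.mem_prod]
  -- Step 1: the product of iterated integrals is the integral over the preimage
  have step1 : simplexIntegral n (fun i => φ (Fin.castAdd m i)) 0 1 *
      simplexIntegral m (fun i => φ (Fin.natAdd n i)) 0 1 =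
      ∫ t in F ⁻¹' (sSimplex n ×ˢ sSimplex m), f t := by
    have h := mpF.setIntegral_preimage_emb F.measurableEmbedding
      (fun p : (Fin n → ℝ) × (Fin m → ℝ) =>
        (∏ i, φ (Fin.castAdd m i) (p.1 i)) * ∏ j, φ (Fin.natAdd n j) (p.2 j))
      (sSimplex n ×ˢ sSimplex m)
    have hsplit : ∀ t : Fin (n + m) → ℝ,
        (∏ i, φ (Fin.castAdd m i) ((F t).1 i)) * (∏ j, φ (Fin.natAdd n j) ((F t).2 j)) = f t := by
      intro t
      rw [hF t]
      exact (Fin.prod_univ_add (f := fun i => φ i (t i))).symm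
    simp only [hsplit] at h
    rw [h]
    have hμ : (volume : Measure ((Fin n → ℝ) × (Fin m → ℝ))) =
        (volume : Measure (Fin n → ℝ)).prod (volume : Measure (Fin m → ℝ)) :=
      Measure.volume_eq_prod _ _
    rw [hμ]
    exact (setIntegral_prod_mul (μ := volume) (ν := volume)
      (fun x : Fin n → ℝ => ∏ i, φ (Fin.castAdd m i) (x i))
      (fun y : Fin m → ℝ => ∏ j, φ (Fin.natAdd n j) (y j))
      (sSimplex n) (sSimplex m)).symm
  -- Step 2: decompose the preimage into the pieces `aSet σ`, `σ` a shuffle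
  have hcover : F ⁻¹' (sSimplex n ×ˢ sSimplex m) =ᵐ[volume] ⋃ σ ∈ Sh, aSet σ := by
    rw [MeasureTheory.ae_eq_set]
    constructor
    · -- difference is contained in the non-injective set
      refine measure_mono_null ?_ volume_not_injective
      rintro t ⟨htD, htU⟩
      rw [hDmem t] at htD
      simp only [Set.mem_setOf_eq]
      intro hinj
      apply htU
      set c : Equiv.Perm (Fin (n + m)) := Tuple.sort t with hc
      have hmono : Monotone (t ∘ c) := Tuple.monotone_sort t
      have hstrict : StrictMono (t ∘ c) :=
        hmono.strictMono_of_injective (hinj.comp c.injective)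
      set σ : Equiv.Perm (Fin (n + m)) := c⁻¹ with hσdef
      have hσinv : σ⁻¹ = c := inv_inv c
      have hu : StrictMono fun j => t (σ⁻¹ j) := by
        rw [hσinv]; exact hstrict
      have huk : ∀ k, (fun j => t (σ⁻¹ j)) (σ k) = t k := by
        intro k; simp
      have hblock1 : StrictMono (fun i : Fin n => σ (Fin.castAdd m i)) := by
        intro i j hij
        have h1 : t (Fin.castAdd m i) ≤ t (Fin.castAdd m j) := htD.1.2 _ _ hij.le
        have hne : t (Fin.castAdd m i) ≠ t (Fin.castAdd m j) := by
          intro h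
          have := hinj h
          have : (i : ℕ) = (j : ℕ) := by
            have := congrArg Fin.val this
            simpa using this
          exact absurd (Fin.ext this) hij.ne
        have h2 : t (Fin.castAdd m i) < t (Fin.castAdd m j) := lt_of_le_of_ne h1 hne
        rw [← huk (Fin.castAdd m i), ← huk (Fin.castAdd m j)] at h2
        exact hu.lt_iff_lt.mp h2
      have hblock2 : StrictMono (fun i : Fin m => σ (Fin.natAdd n i)) := by
        intro i j hij
        have h1 : t (Fin.natAdd n i) ≤ t (Fin.natAdd n j) := htD.2.2 _ _ hij.le
        have hne : t (Fin.natAdd n i) ≠ t (Fin.natAdd n j) := by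
          intro h
          have := hinj h
          have : (i : ℕ) = (j : ℕ) := by
            have := congrArg Fin.val this
            simpa using this
          exact absurd (Fin.ext this) hij.ne
        have h2 : t (Fin.natAdd n i) < t (Fin.natAdd n j) := lt_of_le_of_ne h1 hne
        rw [← huk (Fin.natAdd n i), ← huk (Fin.natAdd n j)] at h2
        exact hu.lt_iff_lt.mp h2
      have hmemSh : σ ∈ Sh := by
        rw [hSh, Finset.mem_filter]
        exact ⟨Finset.mem_univ _, hblock1, hblock2⟩
      refine Set.mem_biUnion hmemSh ?_
      refine ⟨fun i => ?_, hu⟩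
      exact Fin.addCases (fun i => htD.1.1 i) (fun j => htD.2.1 j) i
    · -- the union is contained in the preimage
      have hsub : (⋃ σ ∈ Sh, aSet σ) ⊆ F ⁻¹' (sSimplex n ×ˢ sSimplex m) := by
        intro t ht
        simp only [Set.mem_iUnion] at ht
        obtain ⟨σ, hσ, htA⟩ := ht
        rw [hSh, Finset.mem_filter] at hσ
        obtain ⟨-, h1, h2⟩ := hσ
        obtain ⟨hb, hs⟩ := htA
        have huk : ∀ k, (fun j => t (σ⁻¹ j)) (σ k) = t k := by
          intro k; simp
        rw [hDmem t]
        constructor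
        · refine ⟨fun i => hb _, fun i j hij => ?_⟩
          rcases eq_or_lt_of_le hij with rfl | hlt
          · exact le_refl _
          · have h3 : σ (Fin.castAdd m i) < σ (Fin.castAdd m j) := h1 hlt
            have h4 := hs h3
            rw [huk, huk] at h4
            exact h4.le
        · refine ⟨fun i => hb _, fun i j hij => ?_⟩
          rcases eq_or_lt_of_le hij with rfl | hlt
          · exact le_refl _
          · have h3 : σ (Fin.natAdd n i) < σ (Fin.natAdd n j) := h2 hlt
            have h4 := hs h3
            rw [huk, huk] at h4
            exact h4.le
      rw [Set.diff_eq_empty.2 hsub]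
      simp
  have hdisj : Set.Pairwise (Sh : Set (Equiv.Perm (Fin (n + m)))) (Function.onFun Disjoint (fun σ => aSet σ)) := by
    intro σ _ τ _ hne
    refine Set.disjoint_left.mpr fun t htσ htτ => hne ?_
    exact sort_unique σ τ htσ.2 htτ.2
  have step2 : (∫ t in F ⁻¹' (sSimplex n ×ˢ sSimplex m), f t) =
      ∑ σ ∈ Sh, ∫ t in aSet σ, f t := by
    rw [setIntegral_congr_set hcover]
    exact integral_biUnion_finset Sh (fun σ _ => ms_aSet σ) hdisj (fun σ _ => hIntA σ)
  -- Step 3: each piece gives an iterated integral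
  have step3 : ∀ σ : Equiv.Perm (Fin (n + m)),
      (∫ t in aSet σ, f t) = simplexIntegral (n + m) (fun i => φ (σ⁻¹ i)) 0 1 := by
    intro σ
    let G : (Fin (n + m) → ℝ) ≃ᵐ (Fin (n + m) → ℝ) :=
      (MeasurableEquiv.piCongrLeft (fun _ : Fin (n + m) => ℝ) (σ : Equiv.Perm (Fin (n + m)))).symm
    have mpG : MeasurePreserving (⇑G) volume volume :=
      (volume_measurePreserving_piCongrLeft (fun _ : Fin (n + m) => ℝ)
        (σ : Equiv.Perm (Fin (n + m)))).symm
    have hG : ∀ s : Fin (n + m) → ℝ, G s = fun b => s (σ b) := fun s => rfl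
    have h := mpG.setIntegral_preimage_emb G.measurableEmbedding f (aSet σ)
    rw [← h]
    have hpre : G ⁻¹' aSet σ = sStrict (n + m) := by
      ext s
      rw [Set.mem_preimage, hG s]
      constructor
      · rintro ⟨hb, hs⟩
        refine ⟨fun i => ?_, ?_⟩
        · have := hb (σ⁻¹ i)
          simpa using this
        · have : StrictMono fun j => s (σ (σ⁻¹ j)) := hs
          simpa using this
      · rintro ⟨hb, hs⟩
        refine ⟨fun i => hb _, ?_⟩
        have : StrictMono fun j => s (σ (σ⁻¹ j)) := by
          simpa using hs
        exact this
    have hfG : ∀ s : Fin (n + m) → ℝ, f (G s) = ∏ j, φ (σ⁻¹ j) (s j) := by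
      intro s
      rw [hG s, hf]
      rw [← Equiv.prod_comp σ (fun j => φ (σ⁻¹ j) (s j))]
      refine Finset.prod_congr rfl fun i _ => ?_
      simp
    simp only [hfG, hpre]
    rw [setIntegral_congr_set (sStrict_ae_sSimplex (n + m))]
    rfl
  rw [step1, step2]
  exact Finset.sum_congr rfl fun σ _ => step3 σ
end

section
/- Let f₁, f₂, g₁, g₂ : [0,1] → ℂ be continuous. Define h₁, h₂ : [0,4] → ℂ piecewise by h_i(t) = f_i(t) for t ∈ [0,1], h_i(t) = g_i(t−1) for t ∈ (1,2], h_i(t) = −f_i(3−t) for t ∈ (2,3], and h_i(t) = −g_i(4−t) for t ∈ (3,4]. Then the length-two iterated integral along this commutator concatenation equals a determinant of periods: ∫_{0 ≤ t₁ ≤ t₂ ≤ 4} h₁(t₁)·h₂(t₂) dt₁dt₂ = (∫₀¹ f₁)(∫₀¹ g₂) − (∫₀¹ g₁)(∫₀¹ f₂). -/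
open MeasureTheory

/-- The pullback along the commutator concatenation `γσγ⁻¹σ⁻¹`, parametrized on
`[0,4]`: `h(t) = f(t)` on `[0,1]`, `h(t) = g(t−1)` on `(1,2]`, `h(t) = −f(3−t)`
on `(2,3]`, and `h(t) = −g(4−t)` on `(3,4]`. -/
noncomputable def commPiece (f g : ℝ → ℂ) (t : ℝ) : ℂ :=
  if t ≤ 1 then f t
  else if t ≤ 2 then g (t - 1)
  else if t ≤ 3 then -f (3 - t)
  else -g (4 - t)


lemma simplex_set_eq (a b : ℝ) :
    {t : Fin 2 → ℝ | (∀ i, a ≤ t i ∧ t i ≤ b) ∧ ∀ i j : Fin 2, i ≤ j → t i ≤ t j}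
      = MeasurableEquiv.finTwoArrow ⁻¹' {p : ℝ × ℝ | a ≤ p.1 ∧ p.1 ≤ p.2 ∧ p.2 ≤ b} := by
  ext t
  simp only [Set.mem_setOf_eq, Set.mem_preimage, MeasurableEquiv.finTwoArrow,
    MeasurableEquiv.piFinTwo_apply, piFinTwoEquiv_apply]
  constructor
  · rintro ⟨h1, h2⟩
    exact ⟨(h1 0).1, h2 0 1 (by decide), (h1 1).2⟩
  · rintro ⟨h1, h2, h3⟩
    refine ⟨fun i => ?_, fun i j hij => ?_⟩
    · fin_cases i
      · exact ⟨h1, le_trans h2 h3⟩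
      · exact ⟨le_trans h1 h2, h3⟩
    · fin_cases i <;> fin_cases j <;> simp_all <;> omega

lemma triangle_indicator (φ0 φ1 : ℝ → ℂ) (x y : ℝ) :
    ({p : ℝ × ℝ | 0 ≤ p.1 ∧ p.1 ≤ p.2 ∧ p.2 ≤ 4}).indicator
        (fun p => φ0 p.1 * φ1 p.2) (x, y)
      = (Set.Icc (0:ℝ) 4).indicator
          (fun y' => ((Set.Icc (0:ℝ) y').indicator φ0 x) * φ1 y') y := by
  by_cases hy : y ∈ Set.Icc (0:ℝ) 4
  · rw [Set.indicator_of_mem hy]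
    by_cases hx : x ∈ Set.Icc (0:ℝ) y
    · rw [Set.indicator_of_mem hx, Set.indicator_of_mem]
      exact ⟨hx.1, hx.2, hy.2⟩
    · rw [Set.indicator_of_notMem hx, Set.indicator_of_notMem, zero_mul]
      rintro ⟨h1, h2, h3⟩; exact hx ⟨h1, h2⟩
  · rw [Set.indicator_of_notMem hy, Set.indicator_of_notMem]
    rintro ⟨h1, h2, h3⟩
    exact hy ⟨le_trans h1 h2, h3⟩

lemma simplex_two (φ0 φ1 : ℝ → ℂ)
    (h0 : IntegrableOn φ0 (Set.Icc 0 4)) (h1 : IntegrableOn φ1 (Set.Icc 0 4)) :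
    simplexIntegral 2 ![φ0, φ1] 0 4
      = ∫ y in (0:ℝ)..4, (∫ x in (0:ℝ)..y, φ0 x) * φ1 y := by
  have hT : MeasurableSet {p : ℝ × ℝ | 0 ≤ p.1 ∧ p.1 ≤ p.2 ∧ p.2 ≤ 4} := by
    apply MeasurableSet.inter (measurableSet_le measurable_const measurable_fst)
    exact MeasurableSet.inter (measurableSet_le measurable_fst measurable_snd)
      (measurableSet_le measurable_snd measurable_const)
  -- integrability of the 2d function on the triangle
  have hint : IntegrableOn (fun p : ℝ × ℝ => φ0 p.1 * φ1 p.2)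
      {p : ℝ × ℝ | 0 ≤ p.1 ∧ p.1 ≤ p.2 ∧ p.2 ≤ 4} := by
    have hprod : IntegrableOn (fun p : ℝ × ℝ => φ0 p.1 * φ1 p.2)
        (Set.Icc (0:ℝ) 4 ×ˢ Set.Icc (0:ℝ) 4) := by
      rw [IntegrableOn, Measure.volume_eq_prod, ← Measure.prod_restrict]
      exact h0.mul_prod h1
    apply hprod.mono_set
    rintro ⟨x, y⟩ ⟨hx0, hxy, hy4⟩
    exact ⟨⟨hx0, le_trans hxy hy4⟩, ⟨le_trans hx0 hxy, hy4⟩⟩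
  have key : simplexIntegral 2 ![φ0, φ1] 0 4
      = ∫ p : ℝ × ℝ in {p : ℝ × ℝ | 0 ≤ p.1 ∧ p.1 ≤ p.2 ∧ p.2 ≤ 4},
          φ0 p.1 * φ1 p.2 := by
    rw [simplexIntegral, simplex_set_eq,
      ← (volume_preserving_finTwoArrow ℝ).setIntegral_preimage_emb
        (MeasurableEquiv.finTwoArrow).measurableEmbedding
        (fun p : ℝ × ℝ => φ0 p.1 * φ1 p.2)]
    apply setIntegral_congr_fun
    · exact (MeasurableEquiv.finTwoArrow).measurable hT
    · intro t _
      simp [MeasurableEquiv.finTwoArrow, Fin.prod_univ_two]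
  rw [key]
  rw [← integral_indicator hT]
  rw [Measure.volume_eq_prod]
  rw [integral_prod_symm _ ((integrable_indicator_iff hT).2 (by
      rw [← Measure.volume_eq_prod]; exact hint))]
  have : ∀ y : ℝ, (∫ x : ℝ, ({p : ℝ × ℝ | 0 ≤ p.1 ∧ p.1 ≤ p.2 ∧ p.2 ≤ 4}).indicator
      (fun p => φ0 p.1 * φ1 p.2) (x, y))
      = (Set.Icc (0:ℝ) 4).indicator
          (fun y' => (∫ x in Set.Icc (0:ℝ) y', φ0 x) * φ1 y') y := by
    intro y
    simp_rw [triangle_indicator]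
    by_cases hy : y ∈ Set.Icc (0:ℝ) 4
    · simp only [Set.indicator_of_mem hy]
      rw [integral_mul_const, ← integral_indicator measurableSet_Icc]
    · simp only [Set.indicator_of_notMem hy]
      simp
  simp_rw [this]
  rw [integral_indicator measurableSet_Icc]
  rw [integral_Icc_eq_integral_Ioc, intervalIntegral.integral_of_le (by norm_num : (0:ℝ) ≤ 4)]
  apply setIntegral_congr_fun measurableSet_Ioc
  intro y hy
  simp only
  rw [intervalIntegral.integral_of_le hy.1.le, integral_Icc_eq_integral_Ioc]

section helpers

/-- congruence of interval integrals from pointwise equality on an enclosing Ioc -/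
lemma my_intCongr {F G : ℝ → ℂ} {a b c d : ℝ} (hab : a ≤ b) (hc : c ≤ a) (hd : b ≤ d)
    (hE : ∀ t ∈ Set.Ioc c d, F t = G t) :
    ∫ t in a..b, F t = ∫ t in a..b, G t :=
  intervalIntegral.integral_congr_ae'
    (Filter.Eventually.of_forall fun t ht =>
      hE t ⟨lt_of_le_of_lt hc ht.1, le_trans ht.2 hd⟩)
    (Filter.Eventually.of_forall fun t ht =>
      absurd (ht.1.trans_le (ht.2.trans hab)) (lt_irrefl b))

variable {f g : ℝ → ℂ}

lemma cp_eq1 : ∀ t ∈ Set.Icc (0:ℝ) 1, commPiece f g t = f t :=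
  fun t ht => if_pos ht.2

lemma cp_eq2 : ∀ t ∈ Set.Ioc (1:ℝ) 2, commPiece f g t = g (t - 1) := by
  intro t ht
  simp only [commPiece, if_neg (not_le.2 ht.1), if_pos ht.2]

lemma cp_eq3 : ∀ t ∈ Set.Ioc (2:ℝ) 3, commPiece f g t = -f (3 - t) := by
  intro t ht
  have h1 : ¬ t ≤ 1 := by linarith [ht.1]
  have h2 : ¬ t ≤ 2 := not_le.2 ht.1
  simp only [commPiece, if_neg h1, if_neg h2, if_pos ht.2]

lemma cp_eq4 : ∀ t ∈ Set.Ioc (3:ℝ) 4, commPiece f g t = -g (4 - t) := by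
  intro t ht
  have h1 : ¬ t ≤ 1 := by linarith [ht.1]
  have h2 : ¬ t ≤ 2 := by linarith [ht.1]
  have h3 : ¬ t ≤ 3 := not_le.2 ht.1
  simp only [commPiece, if_neg h1, if_neg h2, if_neg h3]

lemma cp_integrableOn (hf : ContinuousOn f (Set.Icc 0 1)) (hg : ContinuousOn g (Set.Icc 0 1)) :
    IntegrableOn (commPiece f g) (Set.Icc 0 4) := by
  have m1 : Set.MapsTo (fun t : ℝ => t - 1) (Set.Icc 1 2) (Set.Icc 0 1) := by
    intro t ht; obtain ⟨h, h'⟩ := ht; exact ⟨by simp only; linarith, by simp only; linarith⟩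
  have m2 : Set.MapsTo (fun t : ℝ => 3 - t) (Set.Icc 2 3) (Set.Icc 0 1) := by
    intro t ht; obtain ⟨h, h'⟩ := ht; exact ⟨by simp only; linarith, by simp only; linarith⟩
  have m3 : Set.MapsTo (fun t : ℝ => 4 - t) (Set.Icc 3 4) (Set.Icc 0 1) := by
    intro t ht; obtain ⟨h, h'⟩ := ht; exact ⟨by simp only; linarith, by simp only; linarith⟩
  have c1 : ContinuousOn (fun t : ℝ => g (t - 1)) (Set.Icc 1 2) :=
    hg.comp ((continuous_sub_right (1:ℝ)).continuousOn) m1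
  have c2 : ContinuousOn (fun t : ℝ => -f (3 - t)) (Set.Icc 2 3) :=
    (hf.comp ((continuous_sub_left (3:ℝ)).continuousOn) m2).neg
  have c3 : ContinuousOn (fun t : ℝ => -g (4 - t)) (Set.Icc 3 4) :=
    (hg.comp ((continuous_sub_left (4:ℝ)).continuousOn) m3).neg
  have i1 : IntegrableOn (commPiece f g) (Set.Icc 0 1) :=
    (hf.integrableOn_Icc).congr_fun (fun t ht => (cp_eq1 t ht).symm) measurableSet_Icc
  have i2 : IntegrableOn (commPiece f g) (Set.Ioc 1 2) :=
    ((c1.integrableOn_Icc).mono_set Set.Ioc_subset_Icc_self).congr_fun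
      (fun t ht => (cp_eq2 t ht).symm) measurableSet_Ioc
  have i3 : IntegrableOn (commPiece f g) (Set.Ioc 2 3) :=
    ((c2.integrableOn_Icc).mono_set Set.Ioc_subset_Icc_self).congr_fun
      (fun t ht => (cp_eq3 t ht).symm) measurableSet_Ioc
  have i4 : IntegrableOn (commPiece f g) (Set.Ioc 3 4) :=
    ((c3.integrableOn_Icc).mono_set Set.Ioc_subset_Icc_self).congr_fun
      (fun t ht => (cp_eq4 t ht).symm) measurableSet_Ioc
  have hset : Set.Icc (0:ℝ) 4
      = ((Set.Icc 0 1 ∪ Set.Ioc 1 2) ∪ Set.Ioc 2 3) ∪ Set.Ioc 3 4 := by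
    rw [Set.Icc_union_Ioc_eq_Icc (by norm_num) (by norm_num),
      Set.Icc_union_Ioc_eq_Icc (by norm_num) (by norm_num),
      Set.Icc_union_Ioc_eq_Icc (by norm_num) (by norm_num)]
  rw [hset]
  exact ((i1.union i2).union i3).union i4

lemma cp_II (hf : ContinuousOn f (Set.Icc 0 1)) (hg : ContinuousOn g (Set.Icc 0 1))
    {a b : ℝ} (h0 : 0 ≤ a) (hab : a ≤ b) (hb : b ≤ 4) :
    IntervalIntegrable (commPiece f g) volume a b :=
  (intervalIntegrable_iff_integrableOn_Ioc_of_le hab).2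
    ((cp_integrableOn hf hg).mono_set
      (Set.Ioc_subset_Icc_self.trans (Set.Icc_subset_Icc h0 hb)))

end helpers

theorem stmt10_aux (f₁ f₂ g₁ g₂ : ℝ → ℂ)
    (hf₁ : ContinuousOn f₁ (Set.Icc 0 1)) (hf₂ : ContinuousOn f₂ (Set.Icc 0 1))
    (hg₁ : ContinuousOn g₁ (Set.Icc 0 1)) (hg₂ : ContinuousOn g₂ (Set.Icc 0 1)) :
    (∫ y in (0:ℝ)..4, (∫ x in (0:ℝ)..y, commPiece f₁ g₁ x) * commPiece f₂ g₂ y) =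
      (∫ t in (0 : ℝ)..1, f₁ t) * (∫ t in (0 : ℝ)..1, g₂ t) -
        (∫ t in (0 : ℝ)..1, g₁ t) * (∫ t in (0 : ℝ)..1, f₂ t) := by
  set h₁ := commPiece f₁ g₁ with hh₁
  set h₂ := commPiece f₂ g₂ with hh₂
  set A := ∫ t in (0:ℝ)..1, f₁ t with hA
  set B := ∫ t in (0:ℝ)..1, g₁ t with hB
  set F2 := ∫ t in (0:ℝ)..1, f₂ t with hF2
  set G2 := ∫ t in (0:ℝ)..1, g₂ t with hG2
  set P := ∫ s in (0:ℝ)..1, (∫ u in (0:ℝ)..s, f₁ u) * f₂ s with hP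
  set Q := ∫ s in (0:ℝ)..1, (∫ u in (0:ℝ)..s, g₁ u) * g₂ s with hQ
  have II1 : ∀ {a b : ℝ}, 0 ≤ a → a ≤ b → b ≤ 4 → IntervalIntegrable h₁ volume a b :=
    fun h0 hab hb => cp_II hf₁ hg₁ h0 hab hb
  have II2 : ∀ {a b : ℝ}, 0 ≤ a → a ≤ b → b ≤ 4 → IntervalIntegrable h₂ volume a b :=
    fun h0 hab hb => cp_II hf₂ hg₂ h0 hab hb
  have IIc : ∀ {u : ℝ → ℂ}, ContinuousOn u (Set.Icc 0 1) →
      ∀ {a b : ℝ}, 0 ≤ a → a ≤ b → b ≤ 1 → IntervalIntegrable u volume a b := by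
    intro u hu a b h0 hab hb
    exact (intervalIntegrable_iff_integrableOn_Ioc_of_le hab).2
      (hu.integrableOn_Icc.mono_set
        (Set.Ioc_subset_Icc_self.trans (Set.Icc_subset_Icc h0 hb)))
  have primCont : ∀ {u : ℝ → ℂ}, ContinuousOn u (Set.Icc 0 1) →
      ContinuousOn (fun s => ∫ x in (0:ℝ)..s, u x) (Set.uIcc 0 1) := fun hu =>
    intervalIntegral.continuousOn_primitive_interval
      (by rw [Set.uIcc_of_le zero_le_one]; exact hu.integrableOn_Icc)
  -- the primitive of h₁
  have contP : ContinuousOn (fun y => ∫ x in (0:ℝ)..y, h₁ x) (Set.uIcc 0 4) := by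
    apply intervalIntegral.continuousOn_primitive_interval
    rw [Set.uIcc_of_le (by norm_num : (0:ℝ) ≤ 4)]
    exact cp_integrableOn hf₁ hg₁
  -- integrability of the integrand on each subinterval
  have IIPhi : ∀ {a b : ℝ}, 0 ≤ a → a ≤ b → b ≤ 4 →
      IntervalIntegrable (fun y => (∫ x in (0:ℝ)..y, h₁ x) * h₂ y) volume a b := by
    intro a b h0 hab hb
    apply IntervalIntegrable.continuousOn_mul (II2 h0 hab hb)
    apply contP.mono
    rw [Set.uIcc_of_le hab, Set.uIcc_of_le (by norm_num : (0:ℝ) ≤ 4)]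
    exact Set.Icc_subset_Icc h0 hb
  -- split the integral into four pieces
  have split : (∫ y in (0:ℝ)..4, (∫ x in (0:ℝ)..y, h₁ x) * h₂ y)
      = (∫ y in (0:ℝ)..1, (∫ x in (0:ℝ)..y, h₁ x) * h₂ y)
        + (∫ y in (1:ℝ)..2, (∫ x in (0:ℝ)..y, h₁ x) * h₂ y)
        + (∫ y in (2:ℝ)..3, (∫ x in (0:ℝ)..y, h₁ x) * h₂ y)
        + (∫ y in (3:ℝ)..4, (∫ x in (0:ℝ)..y, h₁ x) * h₂ y) := by
    rw [intervalIntegral.integral_add_adjacent_intervals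
        (IIPhi (by norm_num) (by norm_num) (by norm_num))
        (IIPhi (by norm_num) (by norm_num) (by norm_num)),
      intervalIntegral.integral_add_adjacent_intervals
        (IIPhi (by norm_num) (by norm_num) (by norm_num))
        (IIPhi (by norm_num) (by norm_num) (by norm_num)),
      intervalIntegral.integral_add_adjacent_intervals
        (IIPhi (by norm_num) (by norm_num) (by norm_num))
        (IIPhi (by norm_num) (by norm_num) (by norm_num))]
  -- cumulative values of the primitive of h₁
  have c01 : (∫ t in (0:ℝ)..1, h₁ t) = A :=
    my_intCongr zero_le_one le_rfl le_rfl
      (fun t ht => cp_eq1 t (Set.Ioc_subset_Icc_self ht))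
  have c1y : ∀ y, 1 ≤ y → y ≤ 2 →
      (∫ t in (1:ℝ)..y, h₁ t) = ∫ s in (0:ℝ)..(y-1), g₁ s := by
    intro y hy1 hy2
    rw [my_intCongr hy1 le_rfl hy2 cp_eq2,
      intervalIntegral.integral_comp_sub_right (fun s => g₁ s) 1]
    norm_num
  have c2y : ∀ y, 2 ≤ y → y ≤ 3 →
      (∫ t in (2:ℝ)..y, h₁ t) = -∫ s in (3-y)..(1:ℝ), f₁ s := by
    intro y hy1 hy2
    rw [my_intCongr hy1 le_rfl hy2 cp_eq3, intervalIntegral.integral_neg,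
      intervalIntegral.integral_comp_sub_left (fun s => f₁ s) 3]
    norm_num
  have c3y : ∀ y, 3 ≤ y → y ≤ 4 →
      (∫ t in (3:ℝ)..y, h₁ t) = -∫ s in (4-y)..(1:ℝ), g₁ s := by
    intro y hy1 hy2
    rw [my_intCongr hy1 le_rfl hy2 cp_eq4, intervalIntegral.integral_neg,
      intervalIntegral.integral_comp_sub_left (fun s => g₁ s) 4]
    norm_num
  have c02 : (∫ t in (0:ℝ)..2, h₁ t) = A + B := by
    rw [← intervalIntegral.integral_add_adjacent_intervals
        (II1 (by norm_num) (by norm_num) (by norm_num) : IntervalIntegrable h₁ volume 0 1)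
        (II1 (by norm_num) (by norm_num) (by norm_num) : IntervalIntegrable h₁ volume 1 2),
      c01, c1y 2 (by norm_num) (by norm_num)]
    norm_num [hB]
  have c03 : (∫ t in (0:ℝ)..3, h₁ t) = B := by
    rw [← intervalIntegral.integral_add_adjacent_intervals
        (II1 (by norm_num) (by norm_num) (by norm_num) : IntervalIntegrable h₁ volume 0 2)
        (II1 (by norm_num) (by norm_num) (by norm_num) : IntervalIntegrable h₁ volume 2 3),
      c02, c2y 3 (by norm_num) (by norm_num)]
    norm_num [hA]
  -- tail integrals
  have tailf : ∀ s ∈ Set.Ioc (0:ℝ) 1, (∫ u in s..(1:ℝ), f₁ u) = A - ∫ u in (0:ℝ)..s, f₁ u := by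
    intro s hs
    rw [eq_sub_iff_add_eq, add_comm]
    exact intervalIntegral.integral_add_adjacent_intervals
      (IIc hf₁ le_rfl hs.1.le hs.2) (IIc hf₁ hs.1.le hs.2 le_rfl)
  have tailg : ∀ s ∈ Set.Ioc (0:ℝ) 1, (∫ u in s..(1:ℝ), g₁ u) = B - ∫ u in (0:ℝ)..s, g₁ u := by
    intro s hs
    rw [eq_sub_iff_add_eq, add_comm]
    exact intervalIntegral.integral_add_adjacent_intervals
      (IIc hg₁ le_rfl hs.1.le hs.2) (IIc hg₁ hs.1.le hs.2 le_rfl)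
  -- piece 1
  have piece1 : (∫ y in (0:ℝ)..1, (∫ x in (0:ℝ)..y, h₁ x) * h₂ y) = P := by
    rw [hP]
    apply my_intCongr zero_le_one le_rfl le_rfl
    intro y hy
    congr 1
    · exact my_intCongr hy.1.le le_rfl hy.2
        (fun t ht => cp_eq1 t (Set.Ioc_subset_Icc_self ht))
    · exact cp_eq1 y (Set.Ioc_subset_Icc_self hy)
  -- piece 2
  have piece2 : (∫ y in (1:ℝ)..2, (∫ x in (0:ℝ)..y, h₁ x) * h₂ y) = A * G2 + Q := by
    have step1 : (∫ y in (1:ℝ)..2, (∫ x in (0:ℝ)..y, h₁ x) * h₂ y)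
        = ∫ y in (1:ℝ)..2,
            (fun s => (A + ∫ u in (0:ℝ)..s, g₁ u) * g₂ s) (y - 1) := by
      apply my_intCongr one_le_two le_rfl le_rfl
      intro y hy
      simp only
      congr 1
      · rw [← intervalIntegral.integral_add_adjacent_intervals
            (II1 (by norm_num) (by norm_num) (by norm_num) : IntervalIntegrable h₁ volume 0 1)
            (II1 (by norm_num) hy.1.le (by linarith [hy.2])),
          c01, c1y y hy.1.le hy.2]
      · exact cp_eq2 y hy
    rw [step1, intervalIntegral.integral_comp_sub_right
        (fun s => (A + ∫ u in (0:ℝ)..s, g₁ u) * g₂ s) 1]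
    norm_num
    have expand : (∫ s in (0:ℝ)..1, (A + ∫ u in (0:ℝ)..s, g₁ u) * g₂ s)
        = ∫ s in (0:ℝ)..1, (A * g₂ s + (∫ u in (0:ℝ)..s, g₁ u) * g₂ s) := by
      congr 1; funext s; ring
    rw [expand, intervalIntegral.integral_add
        ((IIc hg₂ le_rfl zero_le_one le_rfl).const_mul A)
        ((IIc hg₂ le_rfl zero_le_one le_rfl).continuousOn_mul (primCont hg₁)),
      intervalIntegral.integral_const_mul]
  -- piece 3
  have piece3 : (∫ y in (2:ℝ)..3, (∫ x in (0:ℝ)..y, h₁ x) * h₂ y) = -(B * F2) - P := by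
    have step1 : (∫ y in (2:ℝ)..3, (∫ x in (0:ℝ)..y, h₁ x) * h₂ y)
        = ∫ y in (2:ℝ)..3,
            (fun s => ((A + B) - ∫ u in s..(1:ℝ), f₁ u) * (-f₂ s)) (3 - y) := by
      apply my_intCongr (by norm_num) le_rfl le_rfl
      intro y hy
      simp only
      have e1 : (∫ x in (0:ℝ)..y, h₁ x) = (A + B) - ∫ u in (3-y)..(1:ℝ), f₁ u := by
        rw [← intervalIntegral.integral_add_adjacent_intervals
            (II1 (by norm_num) (by norm_num) (by norm_num) : IntervalIntegrable h₁ volume 0 2)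
            (II1 (by norm_num) hy.1.le (by linarith [hy.2])),
          c02, c2y y hy.1.le hy.2]
        ring
      rw [e1]
      congr 1
      exact cp_eq3 y hy
    rw [step1, intervalIntegral.integral_comp_sub_left
        (fun s => ((A + B) - ∫ u in s..(1:ℝ), f₁ u) * (-f₂ s)) 3]
    simp only [show (3:ℝ)-3 = 0 by norm_num, show (3:ℝ)-2 = 1 by norm_num]
    have expand : (∫ s in (0:ℝ)..1, ((A + B) - ∫ u in s..(1:ℝ), f₁ u) * (-f₂ s))
        = ∫ s in (0:ℝ)..1, (-(B * f₂ s) - (∫ u in (0:ℝ)..s, f₁ u) * f₂ s) := by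
      apply my_intCongr zero_le_one le_rfl le_rfl
      intro s hs
      rw [tailf s hs]
      ring
    have I1 : IntervalIntegrable (fun s => -(B * f₂ s)) volume 0 1 :=
      ((IIc hf₂ le_rfl zero_le_one le_rfl).const_mul B).neg
    have I2 : IntervalIntegrable (fun s => (∫ u in (0:ℝ)..s, f₁ u) * f₂ s) volume 0 1 :=
      (IIc hf₂ le_rfl zero_le_one le_rfl).continuousOn_mul (primCont hf₁)
    rw [expand, intervalIntegral.integral_sub I1 I2,
      intervalIntegral.integral_neg, intervalIntegral.integral_const_mul]
  -- piece 4
  have piece4 : (∫ y in (3:ℝ)..4, (∫ x in (0:ℝ)..y, h₁ x) * h₂ y) = -Q := by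
    have step1 : (∫ y in (3:ℝ)..4, (∫ x in (0:ℝ)..y, h₁ x) * h₂ y)
        = ∫ y in (3:ℝ)..4,
            (fun s => (B - ∫ u in s..(1:ℝ), g₁ u) * (-g₂ s)) (4 - y) := by
      apply my_intCongr (by norm_num) le_rfl le_rfl
      intro y hy
      simp only
      have e1 : (∫ x in (0:ℝ)..y, h₁ x) = B - ∫ u in (4-y)..(1:ℝ), g₁ u := by
        rw [← intervalIntegral.integral_add_adjacent_intervals
            (II1 (by norm_num) (by norm_num) (by norm_num) : IntervalIntegrable h₁ volume 0 3)
            (II1 (by norm_num) hy.1.le (by linarith [hy.2])),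
          c03, c3y y hy.1.le hy.2]
        ring
      rw [e1]
      congr 1
      exact cp_eq4 y hy
    rw [step1, intervalIntegral.integral_comp_sub_left
        (fun s => (B - ∫ u in s..(1:ℝ), g₁ u) * (-g₂ s)) 4]
    simp only [show (4:ℝ)-4 = 0 by norm_num, show (4:ℝ)-3 = 1 by norm_num]
    have expand : (∫ s in (0:ℝ)..1, (B - ∫ u in s..(1:ℝ), g₁ u) * (-g₂ s))
        = ∫ s in (0:ℝ)..1, -((∫ u in (0:ℝ)..s, g₁ u) * g₂ s) := by
      apply my_intCongr zero_le_one le_rfl le_rfl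
      intro s hs
      rw [tailg s hs]
      ring
    rw [expand, intervalIntegral.integral_neg]
  rw [split, piece1, piece2, piece3, piece4]
  ring



set_option maxHeartbeats 1000000 in
/-- the length-two iterated integral along the commutator
concatenation equals the determinant of periods:
`∫_{0 ≤ t₁ ≤ t₂ ≤ 4} h₁(t₁)h₂(t₂) dt₁dt₂ = (∫₀¹f₁)(∫₀¹g₂) − (∫₀¹g₁)(∫₀¹f₂)`. -/
theorem stmt10 (f₁ f₂ g₁ g₂ : ℝ → ℂ)
    (hf₁ : ContinuousOn f₁ (Set.Icc 0 1)) (hf₂ : ContinuousOn f₂ (Set.Icc 0 1))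
    (hg₁ : ContinuousOn g₁ (Set.Icc 0 1)) (hg₂ : ContinuousOn g₂ (Set.Icc 0 1)) :
    simplexIntegral 2 ![commPiece f₁ g₁, commPiece f₂ g₂] 0 4 =
      (∫ t in (0 : ℝ)..1, f₁ t) * (∫ t in (0 : ℝ)..1, g₂ t) -
        (∫ t in (0 : ℝ)..1, g₁ t) * (∫ t in (0 : ℝ)..1, f₂ t) := by
  rw [simplex_two _ _ (cp_integrableOn hf₁ hg₁) (cp_integrableOn hf₂ hg₂)]
  exact stmt10_aux f₁ f₂ g₁ g₂ hf₁ hf₂ hg₁ hg₂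
end
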